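/- Let f be a continuous positive monotone density on ℝ and let E ∈ {−∞, +∞} be the end at which f attains its infimum (E = −∞ if f is nondecreasing, E = +∞ if f is nonincreasing). Assume f is integrable on a neighborhood of E. Then for every V > 0 the half-line of weighted volume V containing E (an interval (−∞, x) with vol((−∞,x)) = V if E = −∞, or (x, +∞) with vol((x,+∞)) = V if E = +∞) is an isoperimetric region of volume V, and it is the unique isoperimetric region of volume V. -/

import Mathlib

open Filter MeasureTheory Set

/-- Weighted volume of a set `Ω ⊆ ℝ` with respect to the density `f`:
`vol(Ω) = ∫_Ω f dx`. -/
noncomputable def wvol (f : ℝ → ℝ) (Ω : Set ℝ) : ENNReal :=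
  ∫⁻ x in Ω, ENNReal.ofReal (f x)

/-- Weighted perimeter of a set `Ω ⊆ ℝ` with respect to the density `f`:
`P(Ω) = ∑_{x ∈ ∂Ω} f(x)`, the (possibly infinite) sum of `f` over the topological
boundary of `Ω`. -/
noncomputable def wper (f : ℝ → ℝ) (Ω : Set ℝ) : ENNReal :=
  ∑' x : frontier Ω, ENNReal.ofReal (f x)

/-- `Ω` is an isoperimetric region (minimizer) of weighted volume `V` on the line. -/
def IsIsopRegion (f : ℝ → ℝ) (Ω : Set ℝ) (V : ENNReal) : Prop :=
  IsOpen Ω ∧ wvol f Ω = V ∧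
    ∀ U : Set ℝ, IsOpen U → wvol f U = V → wper f Ω ≤ wper f U

/-- A single frontier point bounds the perimeter from below. -/
lemma le_wper {f : ℝ → ℝ} {Ω : Set ℝ} {y : ℝ} (hy : y ∈ frontier Ω) :
    ENNReal.ofReal (f y) ≤ wper f Ω :=
  ENNReal.le_tsum (⟨y, hy⟩ : frontier Ω)

/-- Two distinct frontier points bound the perimeter from below. -/
lemma two_le_wper {f : ℝ → ℝ} {Ω : Set ℝ} {y z : ℝ} (hy : y ∈ frontier Ω)
    (hz : z ∈ frontier Ω) (hne : y ≠ z) :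
    ENNReal.ofReal (f y) + ENNReal.ofReal (f z) ≤ wper f Ω := by
  have hne' : (⟨y, hy⟩ : frontier Ω) ≠ ⟨z, hz⟩ := by
    simp [Subtype.ext_iff, hne]
  have := ENNReal.sum_le_tsum (f := fun p : frontier Ω => ENNReal.ofReal (f p))
    ({⟨y, hy⟩, ⟨z, hz⟩} : Finset (frontier Ω))
  rwa [Finset.sum_pair hne'] at this

/-- Perimeter of a lower half-line. -/
lemma wper_Iio (f : ℝ → ℝ) (x : ℝ) : wper f (Iio x) = ENNReal.ofReal (f x) := by
  unfold wper
  rw [show (frontier (Iio x) : Set ℝ) = {x} from frontier_Iio]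
  exact tsum_singleton x (fun t => ENNReal.ofReal (f t))

/-- Connectedness lemma: a preconnected set avoiding the frontier of `Ω` is contained
in `Ω` or disjoint from it. -/
lemma piece {Ω I : Set ℝ} (hI : IsPreconnected I) (h : ∀ y ∈ I, y ∉ frontier Ω) :
    I ⊆ Ω ∨ I ∩ Ω = ∅ := by
  have hsub : I ⊆ interior Ω ∪ (closure Ω)ᶜ := by
    intro t ht
    by_cases hc : t ∈ closure Ω
    · left
      by_contra hint
      exact h t ht ⟨hc, hint⟩
    · exact Or.inr hc
  rcases hI.subset_or_subset isOpen_interior (isOpen_compl_iff.2 isClosed_closure)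
      (disjoint_compl_right.mono_left interior_subset_closure) hsub with h1 | h2
  · exact Or.inl (h1.trans interior_subset)
  · refine Or.inr (eq_empty_of_forall_notMem fun t ht => ?_)
    exact (h2 ht.1) (subset_closure ht.2)

/-- wvol of the reflected set for the reflected density. -/
lemma wvol_neg (f : ℝ → ℝ) (S : Set ℝ) :
    wvol (fun t => f (-t)) (Neg.neg ⁻¹' S) = wvol f S := by
  unfold wvol
  exact (Measure.measurePreserving_neg (volume : Measure ℝ)).setLIntegral_comp_preimage_emb
    (Homeomorph.neg ℝ).measurableEmbedding (fun y => ENNReal.ofReal (f y)) S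

/-- wper of the reflected set for the reflected density. -/
lemma wper_neg (f : ℝ → ℝ) (S : Set ℝ) :
    wper (fun t => f (-t)) (Neg.neg ⁻¹' S) = wper f S := by
  have hfr : frontier (Neg.neg ⁻¹' S) = Neg.neg ⁻¹' frontier S :=
    ((Homeomorph.neg ℝ).preimage_frontier S).symm
  unfold wper
  have e1 : (∑' x : frontier (Neg.neg ⁻¹' S), ENNReal.ofReal ((fun t => f (-t)) x))
      = ∑' x : ℝ, (frontier (Neg.neg ⁻¹' S)).indicator
          (fun t => ENNReal.ofReal (f (-t))) x := by
    exact tsum_subtype (frontier (Neg.neg ⁻¹' S)) (fun t => ENNReal.ofReal (f (-t)))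
  have e3 : (∑' x : frontier S, ENNReal.ofReal (f x))
      = ∑' x : ℝ, (frontier S).indicator (fun t => ENNReal.ofReal (f t)) x := by
    exact tsum_subtype (frontier S) (fun t => ENNReal.ofReal (f t))
  rw [e1, e3, hfr]
  rw [← (Equiv.neg ℝ).tsum_eq (fun y : ℝ => (frontier S).indicator
      (fun t => ENNReal.ofReal (f t)) y)]
  congr 1

lemma neg_preimage_neg_preimage (S : Set ℝ) : Neg.neg ⁻¹' (Neg.neg ⁻¹' S) = S := by
  ext t; simp

/-- Isoperimetric regions transfer under reflection. -/
lemma isop_neg (f : ℝ → ℝ) (S : Set ℝ) (W : ENNReal) (h : IsIsopRegion f S W) :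
    IsIsopRegion (fun t => f (-t)) (Neg.neg ⁻¹' S) W := by
  obtain ⟨hopen, hvol, hmin⟩ := h
  refine ⟨hopen.preimage continuous_neg, by rw [wvol_neg]; exact hvol, ?_⟩
  intro U hU hUvol
  have hff : (fun t => (fun s => f (-s)) (-t)) = f := by funext t; simp
  have hUvol' : wvol f (Neg.neg ⁻¹' U) = W := by
    have := wvol_neg (fun t => f (-t)) U
    rw [hff] at this
    exact this.trans hUvol
  have h1 : wper (fun t => f (-t)) (Neg.neg ⁻¹' S) = wper f S := wper_neg f S
  have h2 : wper f (Neg.neg ⁻¹' U) = wper (fun t => f (-t)) U := by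
    have := wper_neg (fun t => f (-t)) U
    rw [hff] at this
    exact this
  rw [h1, ← h2]
  exact hmin (Neg.neg ⁻¹' U) (hU.preimage continuous_neg) hUvol'

/-- The monotone case of the main theorem. -/
lemma mono_case (f : ℝ → ℝ) (hcont : Continuous f) (hpos : ∀ x, 0 < f x)
    (V : ℝ) (hV : 0 < V) (hmono : Monotone f) (hint : IntegrableOn f (Iic 0)) :
    ∃ x : ℝ, wvol f (Set.Iio x) = ENNReal.ofReal V ∧
      IsIsopRegion f (Set.Iio x) (ENNReal.ofReal V) ∧
      ∀ Ω : Set ℝ, IsIsopRegion f Ω (ENNReal.ofReal V) → Ω = Set.Iio x := by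
  -- f is integrable on every lower ray
  have hintx : ∀ x : ℝ, IntegrableOn f (Iic x) := by
    intro x
    rcases le_or_gt x 0 with hx | hx
    · exact hint.mono_set (Iic_subset_Iic.2 hx)
    · have h1 : IntegrableOn f (Iic 0 ∪ Ioc 0 x) :=
        hint.union (hcont.integrableOn_Ioc)
      exact h1.mono_set (by rw [Iic_union_Ioc_eq_Iic hx.le])
  set G : ℝ → ℝ := fun x => ∫ t in Iic x, f t with hG
  have hGnn : ∀ x, 0 ≤ G x := fun x =>
    setIntegral_nonneg measurableSet_Iic fun t _ => (hpos t).le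
  have hGsm : StrictMono G := by
    intro a b hab
    have h1 : G b - G a = ∫ t in a..b, f t := intervalIntegral.integral_Iic_sub_Iic (hintx a) (hintx b)
    have h2 : 0 < ∫ t in a..b, f t :=
      intervalIntegral.intervalIntegral_pos_of_pos_on (hcont.intervalIntegrable a b)
        (fun t _ => hpos t) hab
    linarith
  -- wvol of lower rays
  have hwIio : ∀ x : ℝ, wvol f (Iio x) = ENNReal.ofReal (G x) := by
    intro x
    unfold wvol
    rw [setLIntegral_congr (Iio_ae_eq_Iic (a := x))]
    exact (ofReal_integral_eq_lintegral_ofReal (hintx x)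
      (Eventually.of_forall fun t => (hpos t).le)).symm
  have hwIic : ∀ x : ℝ, wvol f (Iic x) = ENNReal.ofReal (G x) := by
    intro x
    exact (ofReal_integral_eq_lintegral_ofReal (hintx x)
      (Eventually.of_forall fun t => (hpos t).le)).symm
  -- wvol of upper rays is infinite
  have hwIoi : ∀ b : ℝ, wvol f (Ioi b) = ⊤ := by
    intro b
    refine top_le_iff.1 ?_
    have h1 : (∫⁻ _ in Ioi b, ENNReal.ofReal (f b)) ≤ wvol f (Ioi b) :=
      setLIntegral_mono (hcont.measurable.ennreal_ofReal)
        (fun t ht => ENNReal.ofReal_le_ofReal (hmono (le_of_lt ht)))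
    rw [setLIntegral_const, Real.volume_Ioi, ENNReal.mul_top] at h1
    · exact h1
    · simp [ENNReal.ofReal_eq_zero, not_le, hpos b]
  -- continuity of G
  have hGcont : Continuous G := by
    have h1 : Continuous fun x => ∫ t in (0:ℝ)..x, f t :=
      intervalIntegral.continuous_primitive
        (fun a b => hcont.intervalIntegrable a b) 0
    have h2 : G = fun x => G 0 + ∫ t in (0:ℝ)..x, f t := by
      funext x
      have := intervalIntegral.integral_Iic_sub_Iic (hintx 0) (hintx x)
      simp only [hG]
      linarith [this]
    rw [h2]
    exact continuous_const.add h1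
  -- G tends to 0 at -∞
  have hGbot : Tendsto G atBot (nhds 0) := by
    have h1 : Tendsto (fun a : ℝ => ∫ t in a..(0:ℝ), f t) atBot
        (nhds (∫ t in Iic (0:ℝ), f t)) :=
      intervalIntegral_tendsto_integral_Iic 0 hint tendsto_id
    have h2 : (fun a : ℝ => G 0 - ∫ t in a..(0:ℝ), f t) = G := by
      funext a
      have := intervalIntegral.integral_Iic_sub_Iic (hintx a) (hintx 0)
      simp only [hG]
      linarith [this]
    have h3 : Tendsto (fun a : ℝ => G 0 - ∫ t in a..(0:ℝ), f t) atBot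
        (nhds (G 0 - ∫ t in Iic (0:ℝ), f t)) := (tendsto_const_nhds).sub h1
    rw [h2] at h3
    rw [show G 0 - ∫ t in Iic (0:ℝ), f t = 0 from by simp [hG]] at h3
    exact h3
  -- G tends to ∞ at +∞
  have hGtop : Tendsto G atTop atTop := by
    have hbd : ∀ x : ℝ, 0 ≤ x → G 0 + f 0 * x ≤ G x := by
      intro x hx
      have h1 : G x - G 0 = ∫ t in (0:ℝ)..x, f t :=
        intervalIntegral.integral_Iic_sub_Iic (hintx 0) (hintx x)
      have h2 : (∫ t in (0:ℝ)..x, (f 0 : ℝ)) ≤ ∫ t in (0:ℝ)..x, f t := by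
        apply intervalIntegral.integral_mono_on hx
        · exact intervalIntegrable_const
        · exact hcont.intervalIntegrable 0 x
        · intro t ht
          exact hmono ht.1
      rw [intervalIntegral.integral_const] at h2
      simp only [smul_eq_mul, sub_zero] at h2
      nlinarith
    have h1 : Tendsto (fun x : ℝ => G 0 + f 0 * x) atTop atTop :=
      tendsto_atTop_add_const_left _ _
        ((tendsto_id (α := ℝ)).const_mul_atTop (hpos 0))
    apply tendsto_atTop_mono' _ _ h1
    filter_upwards [eventually_ge_atTop (0:ℝ)] with x hx
    exact hbd x hx
  -- find x with G x = V
  obtain ⟨a, ha⟩ : ∃ a : ℝ, G a < V := by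
    have := hGbot.eventually (eventually_lt_nhds hV)
    exact (this.exists)
  obtain ⟨b, hb⟩ : ∃ b : ℝ, V < G b := by
    have := hGtop.eventually (eventually_gt_atTop V)
    exact this.exists
  have hab : a ≤ b := by
    by_contra h
    push_neg at h
    exact absurd (hGsm h) (by linarith)
  obtain ⟨x, _, hx⟩ : ∃ x ∈ Icc a b, G x = V := by
    have : V ∈ Icc (G a) (G b) := ⟨ha.le, hb.le⟩
    exact intermediate_value_Icc hab hGcont.continuousOn this
  -- key lemma: every admissible open set has a frontier point ≥ x
  have keypoint : ∀ Ω : Set ℝ, IsOpen Ω → wvol f Ω = ENNReal.ofReal V →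
      ∃ y ∈ frontier Ω, x ≤ y := by
    intro Ω hΩ hΩV
    have hne : (frontier Ω).Nonempty := by
      rw [nonempty_iff_ne_empty]
      intro hfe
      rcases (isClopen_iff.1 (isClopen_iff_frontier_eq_empty.2 hfe)) with h | h
      · rw [h] at hΩV
        simp only [wvol, Measure.restrict_empty, lintegral_zero_measure] at hΩV
        exact absurd hΩV.symm (by simp [ENNReal.ofReal_eq_zero, not_le, hV])
      · rw [h] at hΩV
        have h0 : wvol f (Ioi 0) ≤ wvol f univ := lintegral_mono_set (subset_univ _)
        rw [hwIoi 0] at h0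
        rw [top_le_iff.1 h0] at hΩV
        exact ENNReal.ofReal_ne_top hΩV.symm
    by_contra hno
    push_neg at hno
    have hfr_lt : ∀ y ∈ frontier Ω, y < x := hno
    have hbdd : BddAbove (frontier Ω) := ⟨x, fun y hy => (hfr_lt y hy).le⟩
    set b₀ := sSup (frontier Ω) with hb₀
    have hb₀mem : b₀ ∈ frontier Ω := isClosed_frontier.csSup_mem hne hbdd
    have hb₀x : b₀ < x := hfr_lt _ hb₀mem
    have hpie : Ioi b₀ ⊆ Ω ∨ Ioi b₀ ∩ Ω = ∅ := by
      apply piece isPreconnected_Ioi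
      intro y hy hyfr
      exact absurd (le_csSup hbdd hyfr) (not_le.2 hy)
    rcases hpie with h | h
    · have : wvol f (Ioi b₀) ≤ wvol f Ω := lintegral_mono_set h
      rw [hwIoi b₀, hΩV] at this
      exact absurd (top_le_iff.1 this) (by simp)
    · have hsub : Ω ⊆ Iic b₀ := by
        intro t ht
        by_contra hlt
        simp only [mem_Iic, not_le] at hlt
        exact absurd (Set.eq_empty_iff_forall_notMem.1 h t ⟨hlt, ht⟩) (by simp)
      have h1 : wvol f Ω ≤ wvol f (Iic b₀) := lintegral_mono_set hsub
      rw [hΩV, hwIic] at h1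
      have h2 : V ≤ G b₀ := by
        rwa [ENNReal.ofReal_le_ofReal_iff (hGnn b₀)] at h1
      have h3 : G b₀ < G x := hGsm hb₀x
      rw [hx] at h3
      linarith
  -- classification: open set with frontier {y} and finite positive volume is Iio y
  have classify : ∀ (Ω : Set ℝ) (y : ℝ), IsOpen Ω → frontier Ω = {y} →
      wvol f Ω = ENNReal.ofReal V → Ω = Iio y := by
    intro Ω y hΩ hfr hΩV
    have hyΩ : y ∉ Ω := by
      intro hy
      have : y ∈ frontier Ω := hfr ▸ rfl
      rw [hΩ.frontier_eq] at this
      exact this.2 hy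
    have hIoi : Ioi y ⊆ Ω ∨ Ioi y ∩ Ω = ∅ := by
      apply piece isPreconnected_Ioi
      intro t ht htf
      rw [hfr, mem_singleton_iff] at htf
      exact (ne_of_gt ht) htf
    have hIio : Iio y ⊆ Ω ∨ Iio y ∩ Ω = ∅ := by
      apply piece isPreconnected_Iio
      intro t ht htf
      rw [hfr, mem_singleton_iff] at htf
      exact absurd htf (ne_of_lt ht)
    have hIoi' : Ioi y ∩ Ω = ∅ := by
      rcases hIoi with h | h
      · have : wvol f (Ioi y) ≤ wvol f Ω := lintegral_mono_set h
        rw [hwIoi y, hΩV] at this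
        exact absurd (top_le_iff.1 this) (by simp)
      · exact h
    rcases hIio with h | h
    · apply Subset.antisymm _ h
      intro t ht
      rcases lt_trichotomy t y with h1 | h1 | h1
      · exact h1
      · exact absurd (h1 ▸ ht) hyΩ
      · exact absurd (Set.eq_empty_iff_forall_notMem.1 hIoi' t ⟨h1, ht⟩) (by simp)
    · exfalso
      have : Ω = ∅ := by
        rw [Set.eq_empty_iff_forall_notMem]
        intro t ht
        rcases lt_trichotomy t y with h1 | h1 | h1
        · exact (Set.eq_empty_iff_forall_notMem.1 h t ⟨h1, ht⟩)
        · exact hyΩ (h1 ▸ ht)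
        · exact (Set.eq_empty_iff_forall_notMem.1 hIoi' t ⟨h1, ht⟩)
      rw [this, frontier_empty] at hfr
      exact (singleton_ne_empty y) hfr.symm
  have hvolx : wvol f (Iio x) = ENNReal.ofReal V := by rw [hwIio, hx]
  have hisop : IsIsopRegion f (Iio x) (ENNReal.ofReal V) := by
    refine ⟨isOpen_Iio, hvolx, ?_⟩
    intro U hU hUV
    obtain ⟨y, hy, hxy⟩ := keypoint U hU hUV
    rw [wper_Iio]
    exact le_trans (ENNReal.ofReal_le_ofReal (hmono hxy)) (le_wper hy)
  refine ⟨x, hvolx, hisop, ?_⟩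
  intro Ω hΩisop
  obtain ⟨hΩopen, hΩvol, hΩmin⟩ := hΩisop
  have hper_le : wper f Ω ≤ ENNReal.ofReal (f x) := by
    have := hΩmin (Iio x) isOpen_Iio hvolx
    rwa [wper_Iio] at this
  obtain ⟨y, hy, hxy⟩ := keypoint Ω hΩopen hΩvol
  have hfr_sing : frontier Ω = {y} := by
    apply Set.eq_singleton_iff_unique_mem.2 ⟨hy, ?_⟩
    intro z hz
    by_contra hne
    have h2 : ENNReal.ofReal (f z) + ENNReal.ofReal (f y) ≤ ENNReal.ofReal (f x) :=
      le_trans (two_le_wper hz hy hne) hper_le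
    have h3 : ENNReal.ofReal (f x) ≤ ENNReal.ofReal (f y) :=
      ENNReal.ofReal_le_ofReal (hmono hxy)
    have h4 : ENNReal.ofReal (f z) + ENNReal.ofReal (f y) ≤ 0 + ENNReal.ofReal (f y) := by
      rw [zero_add]; exact le_trans h2 h3
    have h5 : ENNReal.ofReal (f z) ≤ 0 :=
      ENNReal.add_le_add_iff_right ENNReal.ofReal_ne_top |>.1 h4
    have h6 : f z ≤ 0 := by
      simpa [ENNReal.ofReal_eq_zero] using le_antisymm h5 zero_le
    exact absurd h6 (not_le.2 (hpos z))
  have hΩeq : Ω = Iio y := classify Ω y hΩopen hfr_sing hΩvol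
  have hGy : G y = V := by
    rw [hΩeq, hwIio] at hΩvol
    exact (ENNReal.ofReal_eq_ofReal_iff (hGnn y) hV.le).1 hΩvol
  have : y = x := hGsm.injective (by rw [hGy, hx])
  rw [hΩeq, this]

theorem halfline_unique_minimizer_of_monotone_finite_end
    (f : ℝ → ℝ) (hcont : Continuous f) (hpos : ∀ x, 0 < f x)
    (V : ℝ) (hV : 0 < V) :
    (Monotone f → IntegrableOn f (Set.Iic 0) →
      ∃ x : ℝ, wvol f (Set.Iio x) = ENNReal.ofReal V ∧
        IsIsopRegion f (Set.Iio x) (ENNReal.ofReal V) ∧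
        ∀ Ω : Set ℝ, IsIsopRegion f Ω (ENNReal.ofReal V) → Ω = Set.Iio x) ∧
    (Antitone f → IntegrableOn f (Set.Ici 0) →
      ∃ x : ℝ, wvol f (Set.Ioi x) = ENNReal.ofReal V ∧
        IsIsopRegion f (Set.Ioi x) (ENNReal.ofReal V) ∧
        ∀ Ω : Set ℝ, IsIsopRegion f Ω (ENNReal.ofReal V) → Ω = Set.Ioi x) := by
  constructor
  · intro hmono hint
    exact mono_case f hcont hpos V hV hmono hint
  · intro hanti hint
    set g : ℝ → ℝ := fun t => f (-t) with hg
    have hgf : (fun t => g (-t)) = f := by funext t; simp [hg]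
    have hgcont : Continuous g := hcont.comp continuous_neg
    have hgpos : ∀ x, 0 < g x := fun x => hpos (-x)
    have hgmono : Monotone g := fun a b hab => hanti (neg_le_neg hab)
    have hpre : (Iic (0:ℝ)) = Neg.neg ⁻¹' (Ici (0:ℝ)) := by
      ext t; simp
    have hgint : IntegrableOn g (Iic 0) := by
      rw [hpre]
      exact (MeasurePreserving.integrableOn_comp_preimage
        (Measure.measurePreserving_neg (volume : Measure ℝ))
        (Homeomorph.neg ℝ).measurableEmbedding).2 hint
    obtain ⟨x, hvol, hisop, huniq⟩ := mono_case g hgcont hgpos V hV hgmono hgint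
    have hset1 : Neg.neg ⁻¹' (Ioi (-x)) = Iio x := by
      ext t; simp
    have hset2 : Neg.neg ⁻¹' (Iio x) = Ioi (-x) := by
      ext t; simp [neg_lt]
    refine ⟨-x, ?_, ?_, ?_⟩
    · have := wvol_neg f (Ioi (-x))
      rw [hset1] at this
      rw [← this]
      exact hvol
    · have := isop_neg g (Iio x) (ENNReal.ofReal V) hisop
      rwa [hgf, hset2] at this
    · intro Ω hΩ
      have h1 := isop_neg f Ω (ENNReal.ofReal V) hΩ
      have h2 : Neg.neg ⁻¹' Ω = Iio x := huniq _ h1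
      have h3 : Neg.neg ⁻¹' (Neg.neg ⁻¹' Ω) = Ω := neg_preimage_neg_preimage Ω
      rw [← h3, h2, hset2]
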